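/- Suppose U is a normal ultrafilter on a measurable cardinal μ and 2^μ = μ⁺. Then there exists a sequence ⟨A_α : α < μ⁺⟩ of members of U which is ⊆*-decreasing (α₀ < α₁ implies A_{α₁} ⊆* A_{α₀}, i.e., |A_{α₁} \ A_{α₀}| < μ) and which generates U: for every B ∈ U there is α < μ⁺ with A_α ⊆* B. -/

import Mathlib

open Cardinal Set

/-- `U` is an ultrafilter on the set of ordinals `S`. -/
def IsUltrafilterOn (S : Set Ordinal.{0}) (U : Set (Set Ordinal.{0})) : Prop :=
  (∀ A ∈ U, A ⊆ S) ∧ S ∈ U ∧ ∅ ∉ U ∧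
    (∀ A ∈ U, ∀ B ∈ U, A ∩ B ∈ U) ∧
    (∀ A ∈ U, ∀ B, A ⊆ B → B ⊆ S → B ∈ U) ∧
    (∀ A, A ⊆ S → A ∈ U ∨ S \ A ∈ U)

/-- `s` has cardinality `< μ`. -/
def cardLT (s : Set Ordinal.{0}) (μ : Cardinal.{0}) : Prop := #s < Cardinal.lift.{1,0} μ

/-- `s` has cardinality `μ`. -/
def cardEQ (s : Set Ordinal.{0}) (μ : Cardinal.{0}) : Prop := #s = Cardinal.lift.{1,0} μ

/-- If `U` is a normal ultrafilter on a measurable cardinal `μ`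
(an uncountable cardinal carrying a `μ`-complete nonprincipal ultrafilter closed
under diagonal intersections) and `2^μ = μ⁺`, then there is a `⊆*`-decreasing
sequence `⟨A_α : α < μ⁺⟩` of members of `U` generating `U`. -/
theorem stmt3 (μ : Cardinal.{0}) (hμ : ℵ₀ < μ)
    (U : Set (Set Ordinal.{0}))
    (hU : IsUltrafilterOn (Set.Iio μ.ord) U)
    (hcomplete : ∀ s : Set (Set Ordinal.{0}), s ⊆ U → s.Nonempty →
      #s < Cardinal.lift.{1,0} μ → ⋂₀ s ∈ U)
    (hnonprincipal : ∀ β < μ.ord, Set.Iio μ.ord \ {β} ∈ U)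
    (hnormal : ∀ B : Ordinal.{0} → Set Ordinal.{0}, (∀ γ < μ.ord, B γ ∈ U) →
      {β | β < μ.ord ∧ ∀ γ < β, β ∈ B γ} ∈ U)
    (hch : 2 ^ μ = Order.succ μ) :
    ∃ A : Ordinal.{0} → Set Ordinal.{0},
      (∀ α < (Order.succ μ).ord, A α ∈ U) ∧
      (∀ α₀ α₁, α₀ < α₁ → α₁ < (Order.succ μ).ord → cardLT (A α₁ \ A α₀) μ) ∧
      (∀ B ∈ U, ∃ α < (Order.succ μ).ord, cardLT (A α \ B) μ) := by
  classical
  obtain ⟨hsub, hS, hempty, hinter, hmono, hdec⟩ := hU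
  set K := (Order.succ μ).ord with hKdef
  have hμ0 : (0 : Cardinal.{1}) < lift.{1} μ := by simpa using (aleph0_pos.trans hμ)
  have hIic : ∀ γ < μ.ord, #(Iic γ : Set Ordinal) < lift.{1} μ := by
    intro γ hγ
    rw [← Order.Iio_succ, Ordinal.mk_Iio_ordinal, Ordinal.card_succ, Cardinal.lift_lt]
    exact Cardinal.add_lt_of_lt hμ.le ((Cardinal.lt_ord).mp hγ) (one_lt_aleph0.trans hμ)
  have hmkIio : #(Iio μ.ord : Set Ordinal) = lift.{1} μ := by
    rw [Ordinal.mk_Iio_ordinal, Cardinal.card_ord]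
  -- pseudo-intersection lemma via diagonal intersections
  have hpi : ∀ α < K, ∀ prior : ∀ β, β < α → Set Ordinal.{0},
      (∀ β hb, prior β hb ∈ U) →
      ∃ D, D ∈ U ∧ ∀ β hb, #(D \ prior β hb : Set Ordinal) < lift.{1} μ := by
    intro α hα prior hprior
    rcases eq_or_ne α 0 with rfl | hα0
    · exact ⟨Iio μ.ord, hS, fun β hb => absurd hb (by simp)⟩
    · have hcard : #(Iio α : Set Ordinal) ≤ #(Iio μ.ord : Set Ordinal) := by
        rw [Ordinal.mk_Iio_ordinal, hmkIio, Cardinal.lift_le]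
        exact Order.lt_succ_iff.mp ((Cardinal.lt_ord).mp hα)
      obtain ⟨e⟩ := (Cardinal.le_def _ _).mp hcard
      have hne : Nonempty (Iio α : Set Ordinal) := ⟨⟨0, pos_iff_ne_zero.mpr hα0⟩⟩
      obtain ⟨s, hs⟩ : ∃ s : ↥(Iio μ.ord) → ↥(Iio α),
          Function.Surjective s :=
        ⟨Function.invFun e, Function.invFun_surjective e.injective⟩
      set prior' : Ordinal.{0} → Set Ordinal.{0} :=
        fun β => if hb : β < α then prior β hb else Iio μ.ord with hprior'def
      have hprior'U : ∀ β, prior' β ∈ U := by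
        intro β
        simp only [hprior'def]
        split
        · exact hprior _ _
        · exact hS
      have hprior'eq : ∀ β hb, prior' β = prior β hb := fun β hb => by
        simp only [hprior'def, dif_pos hb]
      set B' : Ordinal.{0} → Set Ordinal.{0} :=
        fun γ => if h : γ < μ.ord then prior' (s ⟨γ, h⟩).1 else Iio μ.ord
        with hB'def
      have hB'U : ∀ γ < μ.ord, B' γ ∈ U := by
        intro γ hγ
        simp only [hB'def, dif_pos hγ]
        exact hprior'U _
      refine ⟨{β | β < μ.ord ∧ ∀ γ < β, β ∈ B' γ}, hnormal B' hB'U, ?_⟩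
      intro β hb
      obtain ⟨x, hx⟩ := hs ⟨β, hb⟩
      have hBx : B' x.1 = prior β hb := by
        have h1 : B' x.1 = prior' (s x).1 := by
          simp only [hB'def]
          rw [dif_pos (show (x : Ordinal.{0}) < μ.ord from x.2)]
        rw [h1, hx, hprior'eq β hb]
      have hsubset : {β | β < μ.ord ∧ ∀ γ < β, β ∈ B' γ} \ prior β hb ⊆ Iic x.1 := by
        rintro ξ ⟨⟨hξ1, hξ2⟩, hξ3⟩
        by_contra hle
        rw [mem_Iic, not_le] at hle
        have hmem := hξ2 x.1 hle
        rw [hBx] at hmem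
        exact hξ3 hmem
      exact lt_of_le_of_lt (Cardinal.mk_le_mk_of_subset hsubset) (hIic x.1 x.2)
  -- enumeration of U
  have hKcard : #(Iio K : Set Ordinal) = lift.{1} (Order.succ μ) := by
    rw [hKdef, Ordinal.mk_Iio_ordinal, Cardinal.card_ord]
  have hUcard : #U ≤ #(Iio K : Set Ordinal) := by
    have h1 : #U ≤ #(Set (Iio μ.ord : Set Ordinal)) := by
      refine Cardinal.mk_le_of_injective
        (f := fun A : U => {x : (Iio μ.ord : Set Ordinal) | x.1 ∈ A.1}) ?_
      rintro ⟨A, hA⟩ ⟨B, hB⟩ hAB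
      have hAB' : {x : (Iio μ.ord : Set Ordinal) | x.1 ∈ A} =
          {x : (Iio μ.ord : Set Ordinal) | x.1 ∈ B} := hAB
      ext1
      ext z
      constructor
      · intro hz
        have h2 : (⟨z, hsub A hA hz⟩ : (Iio μ.ord : Set Ordinal)) ∈
            {x : (Iio μ.ord : Set Ordinal) | x.1 ∈ B} := hAB' ▸ hz
        exact h2
      · intro hz
        have h2 : (⟨z, hsub B hB hz⟩ : (Iio μ.ord : Set Ordinal)) ∈
            {x : (Iio μ.ord : Set Ordinal) | x.1 ∈ A} := hAB'.symm ▸ hz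
        exact h2
    calc #U ≤ #(Set (Iio μ.ord : Set Ordinal)) := h1
      _ = 2 ^ #(Iio μ.ord : Set Ordinal) := mk_set
      _ = 2 ^ lift.{1} μ := by rw [hmkIio]
      _ = lift.{1} (2 ^ μ) := by rw [← Cardinal.lift_two_power]
      _ = lift.{1} (Order.succ μ) := by rw [hch]
      _ = #(Iio K : Set Ordinal) := hKcard.symm
  haveI hUne : Nonempty U := ⟨⟨Iio μ.ord, hS⟩⟩
  obtain ⟨g, hgU, hgsur⟩ : ∃ g : Ordinal.{0} → Set Ordinal.{0},
      (∀ α, g α ∈ U) ∧ ∀ B ∈ U, ∃ α < K, g α = B := by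
    obtain ⟨eU⟩ := (Cardinal.le_def _ _).mp hUcard
    obtain ⟨G, hG⟩ : ∃ G : ↥(Iio K) → ↥U, Function.Surjective G :=
      ⟨Function.invFun eU, Function.invFun_surjective eU.injective⟩
    refine ⟨fun α => if h : α < K then (G ⟨α, h⟩).1 else Iio μ.ord, ?_, ?_⟩
    · intro α
      by_cases h : α < K
      · simp only [dif_pos h]; exact (G _).2
      · simp only [dif_neg h]; exact hS
    · intro B hB
      obtain ⟨x, hx⟩ := hG ⟨B, hB⟩
      refine ⟨x.1, x.2, ?_⟩
      show (if h : x.1 < K then (G ⟨x.1, h⟩).1 else Iio μ.ord) = B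
      rw [dif_pos (show x.1 < K from x.2)]
      exact congrArg Subtype.val hx
  -- the recursive step function, via choice
  have hstep : ∀ (α : Ordinal.{0}) (prior : ∀ β, β < α → Set Ordinal.{0}),
      ∃ C : Set Ordinal.{0}, C ∈ U ∧ C ⊆ g α ∧
        (α < K → (∀ β hb, prior β hb ∈ U) →
          ∀ β hb, #(C \ prior β hb : Set Ordinal) < lift.{1} μ) := by
    intro α prior
    by_cases h : α < K ∧ ∀ β hb, prior β hb ∈ U
    · obtain ⟨D, hDU, hD2⟩ := hpi α h.1 prior h.2
      refine ⟨D ∩ g α, hinter _ hDU _ (hgU α), inter_subset_right, ?_⟩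
      intro _ _ β hb
      refine lt_of_le_of_lt (Cardinal.mk_le_mk_of_subset ?_) (hD2 β hb)
      exact fun x hx => ⟨hx.1.1, hx.2⟩
    · exact ⟨g α, hgU α, subset_rfl, fun h1 h2 => absurd ⟨h1, h2⟩ h⟩
  choose F hF1 hF2 hF3 using hstep
  set A : Ordinal.{0} → Set Ordinal.{0} := Ordinal.lt_wf.fix F with hAdef
  have hAeq : ∀ α, A α = F α (fun β _ => A β) := fun α =>
    WellFounded.fix_eq Ordinal.lt_wf F α
  have hAU : ∀ α, A α ∈ U := fun α => by rw [hAeq α]; exact hF1 α _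
  refine ⟨A, fun α _ => hAU α, ?_, ?_⟩
  · intro α₀ α₁ h01 h1K
    show #(A α₁ \ A α₀ : Set Ordinal) < lift.{1} μ
    rw [hAeq α₁]
    exact hF3 α₁ (fun β _ => A β) h1K (fun β _ => hAU β) α₀ h01
  · intro B hB
    obtain ⟨α, hαK, hgα⟩ := hgsur B hB
    refine ⟨α, hαK, ?_⟩
    have hAg : A α ⊆ B := by rw [hAeq α, ← hgα]; exact hF2 α _
    show #(A α \ B : Set Ordinal) < lift.{1} μ
    rw [diff_eq_empty.mpr hAg, mk_emptyCollection]
    exact hμ0
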